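/- Let σ be a linear automorphism of V and let (δ_{i,r}, δ_{i,l})_{i≥1} and (δ'_{i,r}, δ'_{i,l})_{i≥1} both satisfy the sequence-pair recurrence for σ. Then for every integer i ≥ 1, ∑_{j=0}^{i−1} (−1)^j ((δ_{i−j,r} − δ'_{i−j,r}) ⊗ id_V^{⊗j}) = (−1)^{i+1} (δ_{i,l} − δ'_{i,l}) − ∑_{j=1}^{i−1} (−1)^j (σ ⊗ (δ_{i−j,r} − δ'_{i−j,r}) ⊗ id_V^{⊗(j−1)}) as linear maps V^{⊗i} → V^{⊗(i+1)}. -/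
import Mathlib


open scoped TensorProduct
open PiTensorProduct

namespace OrePaper

variable (k : Type*) [Field k] (V : Type*) [AddCommGroup V] [Module k V]

/-- The canonical isomorphism `V^{⊗a} ⊗ V^{⊗b} ≃ V^{⊗(a+b)}`. -/
noncomputable abbrev mulPow (a b : ℕ) :
    ((⨂[k]^a V) ⊗[k] (⨂[k]^b V)) ≃ₗ[k] ⨂[k]^(a+b) V :=
  TensorPower.mulEquiv

variable {k V}

/-- `f ⊗ g` for linear maps between tensor powers, under the canonical identifications. -/
noncomputable def tmap {a b c d : ℕ} (f : (⨂[k]^a V) →ₗ[k] ⨂[k]^c V)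
    (g : (⨂[k]^b V) →ₗ[k] ⨂[k]^d V) :
    (⨂[k]^(a+b) V) →ₗ[k] ⨂[k]^(c+d) V :=
  (mulPow k V c d).toLinearMap ∘ₗ TensorProduct.map f g ∘ₗ (mulPow k V a b).symm.toLinearMap

/-- Transport a linear map between tensor powers along equalities of exponents
(the canonical associativity identifications). -/
noncomputable def conv {a b a' b' : ℕ} (h1 : a = a') (h2 : b = b')
    (f : (⨂[k]^a V) →ₗ[k] ⨂[k]^b V) : (⨂[k]^a' V) →ₗ[k] ⨂[k]^b' V :=
  (TensorPower.cast k V h2).toLinearMap ∘ₗ f ∘ₗ (TensorPower.cast k V h1.symm).toLinearMap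

/-- `f^{⊗n}` for a linear endomorphism `f` of `V`. -/
noncomputable def pmap (f : V →ₗ[k] V) (n : ℕ) : (⨂[k]^n V) →ₗ[k] ⨂[k]^n V :=
  PiTensorProduct.map (fun _ => f)

/-- A family `(δ_{i,r}, δ_{i,l})_{i ≥ 1}` of linear maps
`δ_{i,r} : V^{⊗i} → V^{⊗i} ⊗ V` and `δ_{i,l} : V^{⊗i} → V ⊗ V^{⊗i}` (written, under the
canonical identifications, as maps `V^{⊗i} → V^{⊗(i+1)}`) satisfies the *sequence-pair
recurrence* for a linear automorphism `σ` of `V` if `δ_{1,r} = δ_{1,l}` and, for all `i ≥ 2`,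
`δ_{i,r} + (-1)^i δ_{i,l} = σ ⊗ δ_{i-1,r} + (-1)^i (δ_{i-1,l} ⊗ id_V)`. -/
def SeqPairRec (σ : V ≃ₗ[k] V)
    (δr δl : (i : ℕ) → (⨂[k]^i V) →ₗ[k] ⨂[k]^(i+1) V) : Prop :=
  δr 1 = δl 1 ∧
  ∀ (i : ℕ) (hi : 2 ≤ i),
    δr i + ((-1 : k)^i) • δl i
      = conv (by omega) (by omega) (tmap (pmap σ.toLinearMap 1) (δr (i-1)))
        + ((-1 : k)^i) • conv (by omega) (by omega) (tmap (δl (i-1)) (pmap (LinearMap.id) 1))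

-- basic lemmas
theorem conv_id {a b : ℕ} (h1 : a = a) (h2 : b = b) (f : (⨂[k]^a V) →ₗ[k] ⨂[k]^b V) :
    conv h1 h2 f = f := by
  simp [conv, TensorPower.cast_refl]

theorem conv_conv {a b a' b' a'' b'' : ℕ} (h1 : a = a') (h2 : b = b')
    (h1' : a' = a'') (h2' : b' = b'') (f : (⨂[k]^a V) →ₗ[k] ⨂[k]^b V) :
    conv h1' h2' (conv h1 h2 f) = conv (h1.trans h1') (h2.trans h2') f := by
  subst h1 h2 h1' h2'; simp [conv_id]

theorem conv_symm_eq {a b a' b' : ℕ} (h1 : a = a') (h2 : b = b')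
    (f : (⨂[k]^a V) →ₗ[k] ⨂[k]^b V) (g : (⨂[k]^a' V) →ₗ[k] ⨂[k]^b' V)
    (h : conv h1 h2 f = g) : f = conv h1.symm h2.symm g := by
  subst h1 h2; rw [conv_id] at h; rw [conv_id, h]

theorem conv_add {a b a' b' : ℕ} (h1 : a = a') (h2 : b = b')
    (f g : (⨂[k]^a V) →ₗ[k] ⨂[k]^b V) :
    conv h1 h2 (f + g) = conv h1 h2 f + conv h1 h2 g := by
  simp [conv, LinearMap.add_comp, LinearMap.comp_add]

theorem conv_sub {a b a' b' : ℕ} (h1 : a = a') (h2 : b = b')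
    (f g : (⨂[k]^a V) →ₗ[k] ⨂[k]^b V) :
    conv h1 h2 (f - g) = conv h1 h2 f - conv h1 h2 g := by
  simp [conv, LinearMap.sub_comp, LinearMap.comp_sub]

theorem conv_smul {a b a' b' : ℕ} (h1 : a = a') (h2 : b = b') (c : k)
    (f : (⨂[k]^a V) →ₗ[k] ⨂[k]^b V) :
    conv h1 h2 (c • f) = c • conv h1 h2 f := by
  simp [conv, LinearMap.smul_comp, LinearMap.comp_smul]

theorem tmap_add_left {a b c d : ℕ} (f g : (⨂[k]^a V) →ₗ[k] ⨂[k]^c V)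
    (h : (⨂[k]^b V) →ₗ[k] ⨂[k]^d V) :
    tmap (f + g) h = tmap f h + tmap g h := by
  simp [tmap, TensorProduct.map_add_left, LinearMap.add_comp, LinearMap.comp_add]

theorem tmap_sub_left {a b c d : ℕ} (f g : (⨂[k]^a V) →ₗ[k] ⨂[k]^c V)
    (h : (⨂[k]^b V) →ₗ[k] ⨂[k]^d V) :
    tmap (f - g) h = tmap f h - tmap g h := by
  have := tmap_add_left (f - g) g h
  rw [sub_add_cancel] at this
  rw [this]; abel

theorem tmap_smul_left {a b c d : ℕ} (c' : k) (f : (⨂[k]^a V) →ₗ[k] ⨂[k]^c V)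
    (h : (⨂[k]^b V) →ₗ[k] ⨂[k]^d V) :
    tmap (c' • f) h = c' • tmap f h := by
  simp [tmap, TensorProduct.map_smul_left, LinearMap.smul_comp, LinearMap.comp_smul]

theorem tmap_sub_right {a b c d : ℕ} (f : (⨂[k]^a V) →ₗ[k] ⨂[k]^c V)
    (g h : (⨂[k]^b V) →ₗ[k] ⨂[k]^d V) :
    tmap f (g - h) = tmap f g - tmap f h := by
  have hadd : ∀ (u v : (⨂[k]^b V) →ₗ[k] ⨂[k]^d V), tmap f (u + v) = tmap f u + tmap f v := by
    intro u v
    rw [tmap, tmap, tmap, TensorProduct.map_add_right, LinearMap.add_comp, LinearMap.comp_add]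
  have := hadd (g - h) h
  rw [sub_add_cancel] at this
  rw [eq_sub_iff_add_eq, ← this]


theorem tmap_conv_left {a b c d a' c' : ℕ} (h1 : a = a') (h2 : c = c')
    (f : (⨂[k]^a V) →ₗ[k] ⨂[k]^c V) (g : (⨂[k]^b V) →ₗ[k] ⨂[k]^d V) :
    tmap (conv h1 h2 f) g
      = conv (by rw [h1]) (by rw [h2]) (tmap f g) := by
  subst h1; subst h2; rw [conv_id, conv_id]

theorem pmap_id {n : ℕ} : (pmap (LinearMap.id) n : (⨂[k]^n V) →ₗ[k] ⨂[k]^n V) = LinearMap.id := by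
  simp [pmap, PiTensorProduct.map_id]

theorem tmap_id_id {a b : ℕ} :
    tmap (LinearMap.id : (⨂[k]^a V) →ₗ[k] ⨂[k]^a V)
      (LinearMap.id : (⨂[k]^b V) →ₗ[k] ⨂[k]^b V) = LinearMap.id := by
  rw [tmap, TensorProduct.map_id]
  ext x
  simp

theorem tmap_apply {a b c d : ℕ} (f : (⨂[k]^a V) →ₗ[k] ⨂[k]^c V)
    (g : (⨂[k]^b V) →ₗ[k] ⨂[k]^d V) (x : ⨂[k]^a V) (y : ⨂[k]^b V) :
    tmap f g (mulPow k V a b (x ⊗ₜ y)) = mulPow k V c d (f x ⊗ₜ g y) := by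
  simp [tmap]

theorem cast_mulPow_assoc {a b c : ℕ} (x : ⨂[k]^a V) (y : ⨂[k]^b V) (z : ⨂[k]^c V) :
    TensorPower.cast k V (Nat.add_assoc a b c)
        (mulPow k V (a+b) c (mulPow k V a b (x ⊗ₜ y) ⊗ₜ z))
      = mulPow k V a (b+c) (x ⊗ₜ mulPow k V b c (y ⊗ₜ z)) :=
  TensorPower.mul_assoc x y z

theorem cast_mulPow_one {a : ℕ} (x : ⨂[k]^a V) :
    TensorPower.cast k V (Nat.add_zero a)
        (mulPow k V a 0 (x ⊗ₜ (PiTensorProduct.tprod k (s := fun _ : Fin 0 => V) Fin.elim0))) = x :=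
  TensorPower.mul_one x

theorem conv_tmap_pmap_zero {a c : ℕ} (h1 : a + 0 = a) (h2 : c + 0 = c)
    (f : (⨂[k]^a V) →ₗ[k] ⨂[k]^c V) :
    conv h1 h2 (tmap f (pmap (LinearMap.id) 0)) = f := by
  apply LinearMap.ext; intro w
  have hw : (TensorPower.cast k V h1.symm) w
      = mulPow k V a 0 (w ⊗ₜ (PiTensorProduct.tprod k (s := fun _ : Fin 0 => V) Fin.elim0)) := by
    have h := cast_mulPow_one (k := k) (V := V) w
    conv_lhs => rw [← h]
    rw [TensorPower.cast_cast, TensorPower.cast_refl]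
    rfl
  rw [conv]
  simp only [LinearMap.coe_comp, Function.comp_apply, LinearEquiv.coe_coe]
  rw [hw, tmap_apply, pmap_id]
  have h2' : TensorPower.cast k V h2 (mulPow k V c 0 (f w ⊗ₜ (PiTensorProduct.tprod k (s := fun _ : Fin 0 => V) Fin.elim0))) = f w := by
    have := cast_mulPow_one (k := k) (V := V) (f w)
    convert this using 2
  simpa using h2'


theorem ext2 {a b : ℕ} {W : Type*} [AddCommGroup W] [Module k W]
    {F G : (⨂[k]^(a+b) V) →ₗ[k] W}
    (h : ∀ (x : ⨂[k]^a V) (y : ⨂[k]^b V),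
      F (mulPow k V a b (x ⊗ₜ y)) = G (mulPow k V a b (x ⊗ₜ y))) : F = G := by
  have h2 : F ∘ₗ (mulPow k V a b).toLinearMap = G ∘ₗ (mulPow k V a b).toLinearMap :=
    TensorProduct.ext' h
  apply LinearMap.ext; intro w
  have := LinearMap.congr_fun h2 ((mulPow k V a b).symm w)
  simpa using this

theorem tmap_assoc {a b c d e f' : ℕ} (F : (⨂[k]^a V) →ₗ[k] ⨂[k]^d V)
    (G : (⨂[k]^b V) →ₗ[k] ⨂[k]^e V) (H : (⨂[k]^c V) →ₗ[k] ⨂[k]^f' V) :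
    conv (Nat.add_assoc a b c) (Nat.add_assoc d e f') (tmap (tmap F G) H)
      = tmap F (tmap G H) := by
  apply ext2; intro x w
  rw [← LinearEquiv.apply_symm_apply (mulPow k V b c) w]
  generalize (mulPow k V b c).symm w = u
  induction u using TensorProduct.induction_on with
  | zero => simp [tmap_apply]
  | add u v hu hv =>
    simp only [map_add, TensorProduct.tmul_add] at hu hv ⊢
    rw [hu, hv]
  | tmul y z =>
    rw [tmap_apply, tmap_apply, conv]
    simp only [LinearMap.coe_comp, Function.comp_apply, LinearEquiv.coe_coe]
    have hin : TensorPower.cast k V (Nat.add_assoc a b c).symm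
        (mulPow k V a (b+c) (x ⊗ₜ mulPow k V b c (y ⊗ₜ z)))
        = mulPow k V (a+b) c (mulPow k V a b (x ⊗ₜ y) ⊗ₜ z) := by
      rw [← cast_mulPow_assoc (k := k) (V := V) x y z, TensorPower.cast_cast,
        TensorPower.cast_refl]
      rfl
    rw [hin, tmap_apply, tmap_apply]
    exact cast_mulPow_assoc (F x) (G y) (H z)

theorem rext_conv {m c a b j : ℕ} (h1 : m + j = a) (h2 : c + j = b)
    (f : (⨂[k]^m V) →ₗ[k] ⨂[k]^c V) :
    tmap (conv h1 h2 (tmap f (pmap (LinearMap.id) j))) (pmap (LinearMap.id) 1)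
      = conv (by omega) (by omega) (tmap f (pmap (LinearMap.id) (j+1))) := by
  subst h1; subst h2
  rw [conv_id]
  have hassoc := tmap_assoc (k := k) (V := V) f (pmap (LinearMap.id) j) (pmap (LinearMap.id) 1)
  have hid : tmap (pmap (LinearMap.id) j) (pmap (LinearMap.id) 1)
      = (pmap (LinearMap.id) (j+1) : (⨂[k]^(j+1) V) →ₗ[k] ⨂[k]^(j+1) V) := by
    rw [pmap_id, pmap_id, pmap_id, tmap_id_id]
  rw [hid] at hassoc
  have := conv_symm_eq _ _ _ _ hassoc
  rw [this]


/-- `f ↦ f ⊗ id_V` as a linear map on hom spaces. -/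
noncomputable def rextL (a c : ℕ) :
    ((⨂[k]^a V) →ₗ[k] ⨂[k]^c V) →ₗ[k] ((⨂[k]^(a+1) V) →ₗ[k] ⨂[k]^(c+1) V) where
  toFun f := tmap f (pmap (LinearMap.id) 1)
  map_add' f g := tmap_add_left f g _
  map_smul' r f := tmap_smul_left r f _

theorem conv_tmap_pmap_zero' {a c a' c' : ℕ} (h1 : a + 0 = a') (h2 : c + 0 = c')
    (f : (⨂[k]^a V) →ₗ[k] ⨂[k]^c V) :
    conv h1 h2 (tmap f (pmap (LinearMap.id) 0))
      = conv (by omega) (by omega) f := by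
  have h := conv_tmap_pmap_zero (Nat.add_zero a) (Nat.add_zero c) f
  have h2' := conv_symm_eq _ _ _ _ h
  rw [h2', conv_conv]

theorem term_congr1 (δr δr' : (i : ℕ) → (⨂[k]^i V) →ₗ[k] ⨂[k]^(i+1) V)
    {m m' j a b : ℕ} (e : m = m') (h1 : m + j = a) (h2 : m + 1 + j = b) :
    conv h1 h2 (tmap (δr m - δr' m) (pmap (LinearMap.id) j))
      = conv (by omega) (by omega) (tmap (δr m' - δr' m') (pmap (LinearMap.id) j)) := by
  subst e; rfl

theorem term_congr2 (σ : V ≃ₗ[k] V) (δr δr' : (i : ℕ) → (⨂[k]^i V) →ₗ[k] ⨂[k]^(i+1) V)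
    {m m' j a b : ℕ} (e : m = m') (h1 : 1 + m + j = a) (h2 : 1 + (m + 1) + j = b) :
    conv h1 h2 (tmap (tmap (pmap σ.toLinearMap 1) (δr m - δr' m)) (pmap (LinearMap.id) j))
      = conv (by omega) (by omega)
          (tmap (tmap (pmap σ.toLinearMap 1) (δr m' - δr' m')) (pmap (LinearMap.id) j)) := by
  subst e; rfl

theorem succ_term (δr δr' : (i : ℕ) → (⨂[k]^i V) →ₗ[k] ⨂[k]^(i+1) V)
    {m j a A : ℕ} (eA : A = m)
    (Q1 : A + (j+1) = a+1) (Q2 : A + 1 + (j+1) = a+1+1)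
    (R1 : m + j = a) (R2 : m + 1 + j = a+1) :
    ((-1:k)^(j+1)) • conv Q1 Q2 (tmap (δr A - δr' A) (pmap (LinearMap.id) (j+1)))
      = -(((-1:k)^j) •
          rextL a (a+1) (conv R1 R2 (tmap (δr m - δr' m) (pmap (LinearMap.id) j)))) := by
  subst eA
  have h : rextL a (a+1) (conv R1 R2 (tmap (δr A - δr' A) (pmap (LinearMap.id) j)))
      = conv (by omega) (by omega) (tmap (δr A - δr' A) (pmap (LinearMap.id) (j+1))) :=
    rext_conv R1 R2 _
  rw [h]
  have hQ : conv Q1 Q2 (tmap (δr A - δr' A) (pmap (LinearMap.id) (j+1)))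
      = conv (by omega : A + (j+1) = a+1) (by omega : A + 1 + (j+1) = a+1+1)
          (tmap (δr A - δr' A) (pmap (LinearMap.id) (j+1))) := rfl
  rw [hQ, pow_succ, mul_comm, mul_smul, neg_one_smul]

theorem succ_term_sigma (σ : V ≃ₗ[k] V)
    (δr δr' : (i : ℕ) → (⨂[k]^i V) →ₗ[k] ⨂[k]^(i+1) V)
    {m j a A : ℕ} (eA : A = m)
    (Q1 : 1 + A + (j+1) = a+1) (Q2 : 1 + (A + 1) + (j+1) = a+1+1)
    (R1 : 1 + m + j = a) (R2 : 1 + (m + 1) + j = a+1) :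
    ((-1:k)^(j+1+1)) • conv Q1 Q2
        (tmap (tmap (pmap σ.toLinearMap 1) (δr A - δr' A)) (pmap (LinearMap.id) (j+1)))
      = -(((-1:k)^(j+1)) •
          rextL a (a+1) (conv R1 R2
            (tmap (tmap (pmap σ.toLinearMap 1) (δr m - δr' m)) (pmap (LinearMap.id) j)))) := by
  subst eA
  have h : rextL a (a+1) (conv R1 R2
        (tmap (tmap (pmap σ.toLinearMap 1) (δr A - δr' A)) (pmap (LinearMap.id) j)))
      = conv (by omega) (by omega)
          (tmap (tmap (pmap σ.toLinearMap 1) (δr A - δr' A)) (pmap (LinearMap.id) (j+1))) :=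
    rext_conv R1 R2 _
  rw [h]
  have hQ : conv Q1 Q2 (tmap (tmap (pmap σ.toLinearMap 1) (δr A - δr' A))
        (pmap (LinearMap.id) (j+1)))
      = conv (by omega : 1 + A + (j+1) = a+1) (by omega : 1 + (A+1) + (j+1) = a+1+1)
          (tmap (tmap (pmap σ.toLinearMap 1) (δr A - δr' A)) (pmap (LinearMap.id) (j+1))) := rfl
  rw [hQ, pow_succ, mul_comm, mul_smul, neg_one_smul]


set_option maxHeartbeats 1000000 in
theorem main (σ : V ≃ₗ[k] V)
    (δr δl δr' δl' : (i : ℕ) → (⨂[k]^i V) →ₗ[k] ⨂[k]^(i+1) V)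
    (hpair : SeqPairRec σ δr δl) (hpair' : SeqPairRec σ δr' δl') :
    ∀ n : ℕ,
    (∑ j : Fin (n+1), ((-1 : k)^((j : ℕ))) •
        conv (a' := n+1) (b' := n+1+1) (by have := j.isLt; omega) (by have := j.isLt; omega)
          (tmap (δr (n+1 - (j : ℕ)) - δr' (n+1 - (j : ℕ))) (pmap (LinearMap.id) (j : ℕ))))
    = ((-1 : k)^(n+1+1)) • (δl (n+1) - δl' (n+1))
      - ∑ j : Fin n, ((-1 : k)^((j : ℕ)+1)) •
          conv (a' := n+1) (b' := n+1+1) (by have := j.isLt; omega) (by have := j.isLt; omega)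
            (tmap (tmap (pmap σ.toLinearMap 1)
                (δr (n+1 - ((j : ℕ)+1)) - δr' (n+1 - ((j : ℕ)+1))))
              (pmap (LinearMap.id) (j : ℕ))) := by
  have hD1 : δr 1 - δr' 1 = δl 1 - δl' 1 := by rw [hpair.1, hpair'.1]
  have hrecD : ∀ m : ℕ,
      (δr (m+1+1) - δr' (m+1+1)) + ((-1:k)^(m+1+1)) • (δl (m+1+1) - δl' (m+1+1))
        = conv (by omega : 1+(m+1) = m+1+1) (by omega : 1+(m+1+1) = m+1+1+1)
            (tmap (pmap σ.toLinearMap 1) (δr (m+1) - δr' (m+1)))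
          + ((-1:k)^(m+1+1)) • conv (by omega : (m+1)+1 = m+1+1) (by omega : (m+1+1)+1 = m+1+1+1)
              (tmap (δl (m+1) - δl' (m+1)) (pmap (LinearMap.id) 1)) := by
    intro m
    have e1 : δr (m+1+1) + ((-1:k)^(m+1+1)) • δl (m+1+1)
        = conv (by omega : 1+(m+1) = m+1+1) (by omega : 1+(m+1+1) = m+1+1+1)
            (tmap (pmap σ.toLinearMap 1) (δr (m+1)))
          + ((-1:k)^(m+1+1)) • conv (by omega : (m+1)+1 = m+1+1) (by omega : (m+1+1)+1 = m+1+1+1)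
              (tmap (δl (m+1)) (pmap (LinearMap.id) 1)) := hpair.2 (m+1+1) (by omega)
    have e2 : δr' (m+1+1) + ((-1:k)^(m+1+1)) • δl' (m+1+1)
        = conv (by omega : 1+(m+1) = m+1+1) (by omega : 1+(m+1+1) = m+1+1+1)
            (tmap (pmap σ.toLinearMap 1) (δr' (m+1)))
          + ((-1:k)^(m+1+1)) • conv (by omega : (m+1)+1 = m+1+1) (by omega : (m+1+1)+1 = m+1+1+1)
              (tmap (δl' (m+1)) (pmap (LinearMap.id) 1)) := hpair'.2 (m+1+1) (by omega)
    rw [tmap_sub_right, conv_sub, tmap_sub_left, conv_sub]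
    calc (δr (m+1+1) - δr' (m+1+1)) + ((-1:k)^(m+1+1)) • (δl (m+1+1) - δl' (m+1+1))
        = (δr (m+1+1) + ((-1:k)^(m+1+1)) • δl (m+1+1))
          - (δr' (m+1+1) + ((-1:k)^(m+1+1)) • δl' (m+1+1)) := by module
      _ = _ := by rw [e1, e2]; module
  intro n
  induction n with
  | zero =>
    rw [Fin.sum_univ_one]
    simp only [Finset.univ_eq_empty, Finset.sum_empty, sub_zero]
    calc ((-1:k)^((0:ℕ))) • conv (by omega : (0+1-0) + 0 = 0+1) (by omega : (0+1-0+1) + 0 = 0+1+1)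
          (tmap (δr (0+1-0) - δr' (0+1-0)) (pmap (LinearMap.id) 0))
        = ((-1:k)^((0:ℕ))) • conv (by omega : (1:ℕ) = 0+1) (by omega : (2:ℕ) = 0+1+1)
            (δr 1 - δr' 1) := by rw [conv_tmap_pmap_zero']
      _ = ((-1:k)^(0+1+1)) • (δl (0+1) - δl' (0+1)) := by
          rw [hD1, conv_id]; norm_num
  | succ n ih =>
    conv_lhs => rw [Fin.sum_univ_succ]
    conv_rhs => rw [Fin.sum_univ_succ]
    have hL : (∑ j : Fin (n+1), ((-1 : k)^((↑(Fin.succ j) : ℕ))) •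
          conv (a' := n+1+1) (b' := n+1+1+1) (by have := j.isLt; omega) (by have := j.isLt; omega)
            (tmap (δr (n+1+1 - (↑(Fin.succ j) : ℕ)) - δr' (n+1+1 - (↑(Fin.succ j) : ℕ)))
              (pmap (LinearMap.id) (↑(Fin.succ j) : ℕ))))
        = -(rextL (n+1) (n+1+1) (∑ j : Fin (n+1), ((-1 : k)^((j : ℕ))) •
            conv (a' := n+1) (b' := n+1+1) (by have := j.isLt; omega) (by have := j.isLt; omega)
              (tmap (δr (n+1 - (j : ℕ)) - δr' (n+1 - (j : ℕ))) (pmap (LinearMap.id) (j : ℕ))))) := by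
      rw [map_sum, ← Finset.sum_neg_distrib]
      refine Finset.sum_congr rfl (fun j _ => ?_)
      rw [map_smul]
      exact succ_term δr δr' (m := n+1-(j:ℕ)) (j := (j:ℕ)) (a := n+1)
        (A := n+1+1-((↑(Fin.succ j) : ℕ)))
        (by have h1 := j.isLt; have h2 : (↑(Fin.succ j) : ℕ) = ↑j + 1 := Fin.val_succ j; omega)
        (by have h1 := j.isLt; have h2 : (↑(Fin.succ j) : ℕ) = ↑j + 1 := Fin.val_succ j; omega)
        (by have h1 := j.isLt; have h2 : (↑(Fin.succ j) : ℕ) = ↑j + 1 := Fin.val_succ j; omega)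
        (by have h1 := j.isLt; omega) (by have h1 := j.isLt; omega)
    have hT : (∑ j : Fin n, ((-1 : k)^((↑(Fin.succ j) : ℕ)+1)) •
          conv (a' := n+1+1) (b' := n+1+1+1) (by have := j.isLt; omega) (by have := j.isLt; omega)
            (tmap (tmap (pmap σ.toLinearMap 1)
                (δr (n+1+1 - ((↑(Fin.succ j) : ℕ)+1)) - δr' (n+1+1 - ((↑(Fin.succ j) : ℕ)+1))))
              (pmap (LinearMap.id) (↑(Fin.succ j) : ℕ))))
        = -(rextL (n+1) (n+1+1) (∑ j : Fin n, ((-1 : k)^((j : ℕ)+1)) •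
            conv (a' := n+1) (b' := n+1+1) (by have := j.isLt; omega) (by have := j.isLt; omega)
              (tmap (tmap (pmap σ.toLinearMap 1)
                  (δr (n+1 - ((j : ℕ)+1)) - δr' (n+1 - ((j : ℕ)+1))))
                (pmap (LinearMap.id) (j : ℕ))))) := by
      rw [map_sum, ← Finset.sum_neg_distrib]
      refine Finset.sum_congr rfl (fun j _ => ?_)
      rw [map_smul]
      exact succ_term_sigma σ δr δr' (m := n+1-((j:ℕ)+1)) (j := (j:ℕ)) (a := n+1)
        (A := n+1+1-((↑(Fin.succ j) : ℕ)+1))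
        (by have h1 := j.isLt; have h2 : (↑(Fin.succ j) : ℕ) = ↑j + 1 := Fin.val_succ j; omega)
        (by have h1 := j.isLt; have h2 : (↑(Fin.succ j) : ℕ) = ↑j + 1 := Fin.val_succ j; omega)
        (by have h1 := j.isLt; have h2 : (↑(Fin.succ j) : ℕ) = ↑j + 1 := Fin.val_succ j; omega)
        (by have h1 := j.isLt; omega) (by have h1 := j.isLt; omega)
    rw [hL, hT, ih]
    rw [map_sub, map_smul]
    have hf0 : ((-1 : k)^((↑(0 : Fin (n+1+1)) : ℕ))) •
          conv (a' := n+1+1) (b' := n+1+1+1) (by omega) (by omega)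
            (tmap (δr (n+1+1 - (↑(0 : Fin (n+1+1)) : ℕ)) - δr' (n+1+1 - (↑(0 : Fin (n+1+1)) : ℕ)))
              (pmap (LinearMap.id) (↑(0 : Fin (n+1+1)) : ℕ)))
        = δr (n+1+1) - δr' (n+1+1) := by
      have h0 : ((-1 : k)^((0 : ℕ))) •
            conv (by omega : (n+1+1) + 0 = n+1+1) (by omega : (n+1+1+1) + 0 = n+1+1+1)
              (tmap (δr (n+1+1) - δr' (n+1+1)) (pmap (LinearMap.id) 0))
          = δr (n+1+1) - δr' (n+1+1) := by
        rw [conv_tmap_pmap_zero', conv_id, pow_zero, one_smul]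
      exact h0
    rw [hf0]
    have hT0 : ((-1 : k)^((↑(0 : Fin (n+1)) : ℕ)+1)) •
          conv (a' := n+1+1) (b' := n+1+1+1) (by omega) (by omega)
            (tmap (tmap (pmap σ.toLinearMap 1)
                (δr (n+1+1 - ((↑(0 : Fin (n+1)) : ℕ)+1)) - δr' (n+1+1 - ((↑(0 : Fin (n+1)) : ℕ)+1))))
              (pmap (LinearMap.id) (↑(0 : Fin (n+1)) : ℕ)))
        = -(conv (by omega : 1+(n+1) = n+1+1) (by omega : 1+(n+1+1) = n+1+1+1)
            (tmap (pmap σ.toLinearMap 1) (δr (n+1) - δr' (n+1)))) := by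
      have h0 : ((-1 : k)^((0 : ℕ)+1)) •
            conv (by omega : (1+(n+1)) + 0 = n+1+1) (by omega : (1+(n+1+1)) + 0 = n+1+1+1)
              (tmap (tmap (pmap σ.toLinearMap 1) (δr (n+1) - δr' (n+1))) (pmap (LinearMap.id) 0))
          = -(conv (by omega : 1+(n+1) = n+1+1) (by omega : 1+(n+1+1) = n+1+1+1)
              (tmap (pmap σ.toLinearMap 1) (δr (n+1) - δr' (n+1)))) := by
        rw [conv_tmap_pmap_zero']
        module
      exact h0
    rw [hT0]
    have hrec := hrecD n
    have hrl : rextL (n+1) (n+1+1) (δl (n+1) - δl' (n+1))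
        = conv (by omega : (n+1)+1 = n+1+1) (by omega : (n+1+1)+1 = n+1+1+1)
            (tmap (δl (n+1) - δl' (n+1)) (pmap (LinearMap.id) 1)) := by
      rw [conv_id]; rfl
    rw [hrl]
    have hsign : ((-1:k)^(n+1+1+1)) = -((-1:k)^(n+1+1)) := by rw [pow_succ]; ring
    rw [hsign]
    set Sσ := conv (by omega : 1+(n+1) = n+1+1) (by omega : 1+(n+1+1) = n+1+1+1)
        (tmap (pmap σ.toLinearMap 1) (δr (n+1) - δr' (n+1))) with hSσ
    set Rl := conv (by omega : (n+1)+1 = n+1+1) (by omega : (n+1+1)+1 = n+1+1+1)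
        (tmap (δl (n+1) - δl' (n+1)) (pmap (LinearMap.id) 1)) with hRl
    set T := ∑ j : Fin n, ((-1 : k)^((j : ℕ)+1)) •
            conv (a' := n+1) (b' := n+1+1) (by have := j.isLt; omega) (by have := j.isLt; omega)
              (tmap (tmap (pmap σ.toLinearMap 1)
                  (δr (n+1 - ((j : ℕ)+1)) - δr' (n+1 - ((j : ℕ)+1))))
                (pmap (LinearMap.id) (j : ℕ))) with hTT
    -- hrec : D + c • E = Sσ + c • Rl   with c = (-1)^(n+1+1)
    -- goal : D + -( c' • rextL E - rextL T ) = -(c • E2') - (-Sσ + -(rextL T))  roughly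
    have hgoal : δr (n+1+1) - δr' (n+1+1)
        = -((-1:k)^(n+1+1)) • (δl (n+1+1) - δl' (n+1+1)) + Sσ + ((-1:k)^(n+1+1)) • Rl := by
      calc δr (n+1+1) - δr' (n+1+1)
          = ((δr (n+1+1) - δr' (n+1+1)) + ((-1:k)^(n+1+1)) • (δl (n+1+1) - δl' (n+1+1)))
            - ((-1:k)^(n+1+1)) • (δl (n+1+1) - δl' (n+1+1)) := by module
        _ = (Sσ + ((-1:k)^(n+1+1)) • Rl)
            - ((-1:k)^(n+1+1)) • (δl (n+1+1) - δl' (n+1+1)) := by rw [hrec]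
        _ = _ := by module
    rw [hgoal]
    module


/-- **Proposition 2.5(b)** (algebraic core): if `(δ_{i,r}, δ_{i,l})` and `(δ'_{i,r}, δ'_{i,l})`
both satisfy the sequence-pair recurrence for `σ`, then for every `i ≥ 1`,
`∑_{j=0}^{i−1} (−1)^j ((δ_{i−j,r} − δ'_{i−j,r}) ⊗ id_V^{⊗j})
  = (−1)^{i+1} (δ_{i,l} − δ'_{i,l}) − ∑_{j=1}^{i−1} (−1)^j (σ ⊗ (δ_{i−j,r} − δ'_{i−j,r}) ⊗ id_V^{⊗(j−1)})`
as linear maps `V^{⊗i} → V^{⊗(i+1)}`. -/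
theorem prop_2_5_b (σ : V ≃ₗ[k] V)
    (δr δl δr' δl' : (i : ℕ) → (⨂[k]^i V) →ₗ[k] ⨂[k]^(i+1) V)
    (hpair : SeqPairRec σ δr δl) (hpair' : SeqPairRec σ δr' δl')
    (i : ℕ) (hi : 1 ≤ i) :
    (∑ j : Fin i, ((-1 : k)^((j : ℕ))) •
        conv (a' := i) (b' := i+1) (by have := j.isLt; omega) (by have := j.isLt; omega)
          (tmap (δr (i - (j : ℕ)) - δr' (i - (j : ℕ))) (pmap (LinearMap.id) (j : ℕ))))
    = ((-1 : k)^(i+1)) • (δl i - δl' i)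
      - ∑ j : Fin (i-1), ((-1 : k)^((j : ℕ)+1)) •
          conv (a' := i) (b' := i+1) (by have := j.isLt; omega) (by have := j.isLt; omega)
            (tmap (tmap (pmap σ.toLinearMap 1)
                (δr (i - ((j : ℕ)+1)) - δr' (i - ((j : ℕ)+1))))
              (pmap (LinearMap.id) (j : ℕ))) := by
  obtain ⟨n, rfl⟩ : ∃ n, i = n + 1 := ⟨i - 1, by omega⟩
  exact main σ δr δl δr' δl' hpair hpair' n

end OrePaper
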